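/- Let p₁, p₂, q₁, q₂ be integers with p₁·q₂ − p₂·q₁ ≠ 0. Let S¹ := {z ∈ ℂ : |z| = 1} and T := S¹ × S¹. Let F : S¹ × [0, 1] → T × [0, 1] be a continuous map such that F(z, 0) = ((z^{p₁}, z^{p₂}), 0) and F(z, 1) = ((z^{p₁}, z^{p₂}), 1) for all z ∈ S¹. Then there exist z, w ∈ S¹ and s ∈ [0, 1] such that F(z, s) = ((w^{q₁}, w^{q₂}), 1/2); that is, the image of F intersects the image of the loop w ↦ ((w^{q₁}, w^{q₂}), 1/2). -/

import Mathlib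

open unitInterval

noncomputable def Complex.abs : AbsoluteValue ℂ ℝ where
  toFun z := ‖z‖
  map_mul' := norm_mul
  nonneg' := norm_nonneg
  eq_zero' _ := norm_eq_zero
  add_le' := norm_add_le

theorem Complex.abs_apply' (z : ℂ) : Complex.abs z = ‖z‖ := rfl

theorem Complex.re_le_abs (z : ℂ) : z.re ≤ Complex.abs z := Complex.re_le_norm z

theorem Complex.continuous_abs : Continuous Complex.abs := continuous_norm

theorem Complex.abs_mul_exp_arg_mul_I (x : ℂ) :
    (Complex.abs x : ℂ) * Complex.exp (Complex.arg x * Complex.I) = x :=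
  Complex.norm_mul_exp_arg_mul_I x

theorem Complex.abs_exp_ofReal_mul_I (x : ℝ) : Complex.abs (Complex.exp (x * Complex.I)) = 1 :=
  Complex.norm_exp_ofReal_mul_I x

theorem Complex.abs_ofReal (r : ℝ) : Complex.abs (r : ℂ) = |r| := Complex.norm_real r

theorem Circle.abs_coe (z : Circle) : Complex.abs (z : ℂ) = 1 := Circle.norm_coe z

private lemma prod_ratio (f : ℕ → ℂ) (hf : ∀ k, f k ≠ 0) (n : ℕ) :
    ∏ k ∈ Finset.range n, f (k + 1) / f k = f n / f 0 := by
  induction n with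
  | zero => exact (div_self (hf 0)).symm
  | succ n ih =>
      rw [Finset.prod_range_succ, ih, div_mul_div_comm, mul_comm (f 0) (f n),
        ← div_div, mul_comm (f n) (f (n + 1)), mul_div_assoc, div_self (hf n), mul_one]

private lemma circle_coe_zpow (z : Circle) (n : ℤ) : ((z ^ n : Circle) : ℂ) = (z : ℂ) ^ n := by
  rcases n with m | m
  · norm_cast
  · simp only [zpow_negSucc]; norm_cast

private lemma circle_exp_zpow (x : ℝ) (n : ℤ) :
    (Circle.exp x) ^ n = Circle.exp (n * x) := by
  apply Circle.coe_injective
  rw [circle_coe_zpow, Circle.coe_exp, Circle.coe_exp, ← Complex.exp_int_mul]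
  push_cast
  ring_nf

private lemma arg_pos_mul_exp {r : ℝ} (hr : 0 < r) {x : ℝ} (h1 : -Real.pi < x)
    (h2 : x ≤ Real.pi) : Complex.arg ((r : ℂ) * Complex.exp (x * Complex.I)) = x := by
  rw [Complex.arg_real_mul _ hr, Complex.exp_mul_I, Complex.arg_cos_add_sin_mul_I ⟨h1, h2⟩]

private lemma slit_of_close (z : ℂ) (h : Complex.abs (z - 1) < 1) : z ∈ Complex.slitPlane := by
  rw [Complex.mem_slitPlane_iff]
  left
  have h1 : (1 - z).re ≤ Complex.abs (1 - z) := Complex.re_le_abs _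
  have h2 : Complex.abs (1 - z) = Complex.abs (z - 1) := by
    rw [← neg_sub z 1, AbsoluteValue.map_neg]
  have h3 : (1 - z).re = 1 - z.re := by simp
  linarith

set_option maxHeartbeats 1000000 in
private lemma key_lemma (Φ : ℝ × ℝ → ℂ) (hΦ : Continuous Φ)
    (hloop : ∀ s, Φ (0, s) = Φ (1, s))
    (hne : ∀ p, Φ p ≠ 0)
    (θ₀ θ₁ : ℝ → ℝ) (hθ₀ : Continuous θ₀) (hθ₁ : Continuous θ₁)
    (e0 : ∀ t, Φ (t, 0) = (Complex.abs (Φ (t, 0)) : ℂ) * Complex.exp (θ₀ t * Complex.I))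
    (e1 : ∀ t, Φ (t, 1) = (Complex.abs (Φ (t, 1)) : ℂ) * Complex.exp (θ₁ t * Complex.I)) :
    θ₀ 1 - θ₀ 0 = θ₁ 1 - θ₁ 0 := by
  classical
  set K := (Set.Icc (0:ℝ) 1) ×ˢ (Set.Icc (0:ℝ) 1) with hKdef
  have hK : IsCompact K := isCompact_Icc.prod isCompact_Icc
  have hKne : K.Nonempty := ⟨(0,0), ⟨Set.left_mem_Icc.2 zero_le_one, Set.left_mem_Icc.2 zero_le_one⟩⟩
  obtain ⟨p₀, hp₀K, hp₀⟩ := hK.exists_isMinOn hKne ((Complex.continuous_abs.comp hΦ).continuousOn)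
  set ε := Complex.abs (Φ p₀) with hεdef
  have hε : 0 < ε := AbsoluteValue.pos _ (hne p₀)
  have hεle : ∀ x ∈ K, ε ≤ Complex.abs (Φ x) := fun x hx => hp₀ hx
  obtain ⟨δ, hδpos, hΦuc⟩ := Metric.uniformContinuousOn_iff.1
    (hK.uniformContinuousOn_of_continuous hΦ.continuousOn) ε hε
  obtain ⟨δ₀, hδ₀pos, hθ₀uc⟩ := Metric.uniformContinuousOn_iff.1
    ((isCompact_Icc (a := (0:ℝ)) (b := 1)).uniformContinuousOn_of_continuous hθ₀.continuousOn)
    Real.pi Real.pi_pos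
  obtain ⟨δ₁, hδ₁pos, hθ₁uc⟩ := Metric.uniformContinuousOn_iff.1
    ((isCompact_Icc (a := (0:ℝ)) (b := 1)).uniformContinuousOn_of_continuous hθ₁.continuousOn)
    Real.pi Real.pi_pos
  obtain ⟨n, hn⟩ := exists_nat_one_div_lt (lt_min hδpos (lt_min hδ₀pos hδ₁pos))
  set N : ℕ := n + 1 with hNdef
  have hNpos : (0:ℝ) < (N:ℝ) := by positivity
  have hNlt : 1 / (N:ℝ) < min δ (min δ₀ δ₁) := by exact_mod_cast hn
  set T : ℕ → ℝ := fun k => (k : ℝ) / N with hTdef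
  have hT01 : ∀ k, k ≤ N → T k ∈ Set.Icc (0:ℝ) 1 := by
    intro k hk
    constructor
    · positivity
    · rw [div_le_one hNpos]; exact_mod_cast hk
  have hTsub : ∀ k : ℕ, T (k+1) - T k = 1 / (N:ℝ) := by
    intro k
    simp only [hTdef]
    push_cast
    field_simp
    ring
  have hTN : T N = 1 := div_self hNpos.ne'
  have hT0 : T 0 = 0 := by simp [hTdef]
  set q : ℕ → ℝ → ℂ := fun k s => Φ (T (k+1), s) / Φ (T k, s) with hqdef
  have hq0 : ∀ k s, q k s ≠ 0 := fun k s => div_ne_zero (hne _) (hne _)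
  have hqc : ∀ k, Continuous (fun s => q k s) := by
    intro k
    apply Continuous.div
    · exact hΦ.comp (continuous_const.prodMk continuous_id)
    · exact hΦ.comp (continuous_const.prodMk continuous_id)
    · exact fun s => hne _
  have hgrid : ∀ s ∈ Set.Icc (0:ℝ) 1, ∀ k, k < N →
      dist (Φ (T (k+1), s)) (Φ (T k, s)) < ε := by
    intro s hs k hk
    have hx : (T (k+1), s) ∈ K := ⟨hT01 (k+1) hk, hs⟩
    have hy : (T k, s) ∈ K := ⟨hT01 k hk.le, hs⟩
    apply hΦuc _ hx _ hy
    rw [Prod.dist_eq]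
    have : dist (T (k+1)) (T k) = 1 / (N:ℝ) := by
      rw [Real.dist_eq, hTsub k, abs_of_pos (by positivity)]
    rw [this, dist_self]
    exact max_lt (lt_of_lt_of_le hNlt (min_le_left _ _)) (by positivity)
  have hqslit : ∀ s ∈ Set.Icc (0:ℝ) 1, ∀ k, k < N → q k s ∈ Complex.slitPlane := by
    intro s hs k hk
    apply slit_of_close
    have hsub : q k s - 1 = (Φ (T (k+1), s) - Φ (T k, s)) / Φ (T k, s) := by
      show Φ (T (k+1), s) / Φ (T k, s) - 1 = _
      rw [div_sub_one (hne _)]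
    rw [hsub, map_div₀, div_lt_one (AbsoluteValue.pos _ (hne _))]
    calc Complex.abs (Φ (T (k+1), s) - Φ (T k, s)) < ε := by
          rw [Complex.abs_apply', ← Complex.dist_eq]; exact hgrid s hs k hk
      _ ≤ Complex.abs (Φ (T k, s)) := hεle _ ⟨hT01 k hk.le, hs⟩
  set S : ℝ → ℝ := fun s => ∑ k ∈ Finset.range N, Complex.arg (q k s) with hSdef
  have hScont : ContinuousOn S (Set.Icc (0:ℝ) 1) := by
    apply continuousOn_finset_sum
    intro k hk
    intro s hs
    exact ((Complex.continuousAt_arg (hqslit s hs k (Finset.mem_range.1 hk))).comp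
      (hqc k).continuousAt).continuousWithinAt
  have hSint : ∀ s ∈ Set.Icc (0:ℝ) 1, ∃ m : ℤ, S s = m * (2 * Real.pi) := by
    intro s hs
    have hexp : Complex.exp ((S s : ℝ) * Complex.I) = 1 := by
      have h1 : ((S s : ℝ) : ℂ) * Complex.I
          = ∑ k ∈ Finset.range N, ((Complex.arg (q k s) : ℂ) * Complex.I) := by
        rw [hSdef]
        push_cast
        rw [Finset.sum_mul]
      rw [h1, Complex.exp_sum]
      have h2 : ∀ k ∈ Finset.range N,
          Complex.exp ((Complex.arg (q k s) : ℂ) * Complex.I)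
            = q k s / (Complex.abs (q k s) : ℂ) := by
        intro k _
        rw [eq_div_iff (Complex.ofReal_ne_zero.2 (AbsoluteValue.ne_zero _ (hq0 k s))), mul_comm]
        exact Complex.abs_mul_exp_arg_mul_I _
      rw [Finset.prod_congr rfl h2, Finset.prod_div_distrib]
      have h3 : ∏ k ∈ Finset.range N, q k s = 1 := by
        rw [hqdef]
        rw [prod_ratio (fun k => Φ (T k, s)) (fun k => hne _) N, hTN, hT0, ← hloop s, div_self (hne _)]
      have h4 : (∏ k ∈ Finset.range N, ((Complex.abs (q k s) : ℝ) : ℂ)) = 1 := by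
        rw [← Complex.ofReal_prod, ← map_prod Complex.abs _ _, h3, map_one, Complex.ofReal_one]
      rw [h3, h4, div_one]
    obtain ⟨m, hm⟩ := Complex.exp_eq_one_iff.1 hexp
    refine ⟨m, ?_⟩
    have h5 : ((S s : ℝ) : ℂ) = (m : ℂ) * (2 * (Real.pi : ℂ)) := by
      apply mul_right_cancel₀ Complex.I_ne_zero
      rw [hm]; ring
    exact_mod_cast h5
  have harg0 : ∀ k, k < N → Complex.arg (q k 0) = θ₀ (T (k+1)) - θ₀ (T k) := by
    intro k hk
    have hx : |θ₀ (T (k+1)) - θ₀ (T k)| < Real.pi := by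
      have := hθ₀uc _ (hT01 (k+1) hk) _ (hT01 k hk.le)
        (by rw [Real.dist_eq, hTsub k, abs_of_pos (by positivity)]
            exact lt_of_lt_of_le hNlt (le_trans (min_le_right _ _) (min_le_left _ _)))
      rwa [Real.dist_eq] at this
    have hq : q k 0 = ((Complex.abs (Φ (T (k+1), 0)) / Complex.abs (Φ (T k, 0)) : ℝ) : ℂ)
        * Complex.exp ((θ₀ (T (k+1)) - θ₀ (T k) : ℝ) * Complex.I) := by
      show Φ (T (k+1), 0) / Φ (T k, 0) = _
      conv_lhs => rw [e0 (T (k+1)), e0 (T k)]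
      push_cast
      rw [sub_mul, Complex.exp_sub, div_mul_div_comm]
    rw [hq]
    exact arg_pos_mul_exp
      (div_pos (AbsoluteValue.pos _ (hne _)) (AbsoluteValue.pos _ (hne _)))
      (neg_lt_of_abs_lt hx) (le_of_lt (lt_of_abs_lt hx))
  have harg1 : ∀ k, k < N → Complex.arg (q k 1) = θ₁ (T (k+1)) - θ₁ (T k) := by
    intro k hk
    have hx : |θ₁ (T (k+1)) - θ₁ (T k)| < Real.pi := by
      have := hθ₁uc _ (hT01 (k+1) hk) _ (hT01 k hk.le)
        (by rw [Real.dist_eq, hTsub k, abs_of_pos (by positivity)]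
            exact lt_of_lt_of_le hNlt (le_trans (min_le_right _ _) (min_le_right _ _)))
      rwa [Real.dist_eq] at this
    have hq : q k 1 = ((Complex.abs (Φ (T (k+1), 1)) / Complex.abs (Φ (T k, 1)) : ℝ) : ℂ)
        * Complex.exp ((θ₁ (T (k+1)) - θ₁ (T k) : ℝ) * Complex.I) := by
      show Φ (T (k+1), 1) / Φ (T k, 1) = _
      conv_lhs => rw [e1 (T (k+1)), e1 (T k)]
      push_cast
      rw [sub_mul, Complex.exp_sub, div_mul_div_comm]
    rw [hq]
    exact arg_pos_mul_exp
      (div_pos (AbsoluteValue.pos _ (hne _)) (AbsoluteValue.pos _ (hne _)))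
      (neg_lt_of_abs_lt hx) (le_of_lt (lt_of_abs_lt hx))
  have hS0 : S 0 = θ₀ 1 - θ₀ 0 := by
    rw [hSdef]
    calc (∑ k ∈ Finset.range N, Complex.arg (q k 0))
        = ∑ k ∈ Finset.range N, (θ₀ (T (k+1)) - θ₀ (T k)) :=
          Finset.sum_congr rfl (fun k hk => harg0 k (Finset.mem_range.1 hk))
      _ = θ₀ (T N) - θ₀ (T 0) := Finset.sum_range_sub (fun k => θ₀ (T k)) N
      _ = θ₀ 1 - θ₀ 0 := by rw [hTN, hT0]
  have hS1 : S 1 = θ₁ 1 - θ₁ 0 := by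
    rw [hSdef]
    calc (∑ k ∈ Finset.range N, Complex.arg (q k 1))
        = ∑ k ∈ Finset.range N, (θ₁ (T (k+1)) - θ₁ (T k)) :=
          Finset.sum_congr rfl (fun k hk => harg1 k (Finset.mem_range.1 hk))
      _ = θ₁ (T N) - θ₁ (T 0) := Finset.sum_range_sub (fun k => θ₁ (T k)) N
      _ = θ₁ 1 - θ₁ 0 := by rw [hTN, hT0]
  have h01 : (0:ℝ) ∈ Set.Icc (0:ℝ) 1 := Set.left_mem_Icc.2 zero_le_one
  have h11 : (1:ℝ) ∈ Set.Icc (0:ℝ) 1 := Set.right_mem_Icc.2 zero_le_one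
  obtain ⟨m₀, hm₀⟩ := hSint 0 h01
  obtain ⟨m₁, hm₁⟩ := hSint 1 h11
  have hpi := Real.pi_pos
  have hmain : S 0 = S 1 := by
    rcases lt_trichotomy (S 0) (S 1) with hlt | heq | hgt
    · exfalso
      have hlt' : (m₀ : ℝ) * (2 * Real.pi) < (m₁ : ℝ) * (2 * Real.pi) := by
        rw [← hm₀, ← hm₁]; exact hlt
      have hmm : (m₀ : ℝ) < (m₁ : ℝ) :=
        (mul_lt_mul_iff_left₀ (by positivity)).1 hlt'
      have hmm' : (m₀ : ℝ) + 1 ≤ m₁ := by exact_mod_cast (by exact_mod_cast hmm : m₀ < m₁)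
      have h2pi : S 0 + 2 * Real.pi ≤ S 1 := by
        have := mul_le_mul_of_nonneg_right hmm' (by positivity : (0:ℝ) ≤ 2 * Real.pi)
        rw [hm₀, hm₁]; linarith [this]
      have hmem : S 0 + Real.pi ∈ Set.Icc (S 0) (S 1) := ⟨by linarith, by linarith⟩
      obtain ⟨s, hs, hSs⟩ := intermediate_value_Icc zero_le_one hScont hmem
      obtain ⟨m, hm⟩ := hSint s hs
      have hz : ((2*m - 2*m₀ - 1 : ℤ) : ℝ) * Real.pi = 0 := by
        push_cast
        linear_combination hSs - hm + hm₀
      have hz2 : (2*m - 2*m₀ - 1 : ℤ) = 0 := by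
        exact_mod_cast (mul_eq_zero.1 hz).resolve_right Real.pi_ne_zero
      omega
    · exact heq
    · exfalso
      have hlt' : (m₁ : ℝ) * (2 * Real.pi) < (m₀ : ℝ) * (2 * Real.pi) := by
        rw [← hm₀, ← hm₁]; exact hgt
      have hmm : (m₁ : ℝ) < (m₀ : ℝ) :=
        (mul_lt_mul_iff_left₀ (by positivity)).1 hlt'
      have hmm' : (m₁ : ℝ) + 1 ≤ m₀ := by exact_mod_cast (by exact_mod_cast hmm : m₁ < m₀)
      have h2pi : S 1 + 2 * Real.pi ≤ S 0 := by
        have := mul_le_mul_of_nonneg_right hmm' (by positivity : (0:ℝ) ≤ 2 * Real.pi)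
        rw [hm₀, hm₁]; linarith [this]
      have hmem : S 1 + Real.pi ∈ Set.Icc (S 1) (S 0) := ⟨by linarith, by linarith⟩
      obtain ⟨s, hs, hSs⟩ := intermediate_value_Icc' zero_le_one hScont hmem
      obtain ⟨m, hm⟩ := hSint s hs
      have hz : ((2*m - 2*m₁ - 1 : ℤ) : ℝ) * Real.pi = 0 := by
        push_cast
        linear_combination hSs - hm + hm₁
      have hz2 : (2*m - 2*m₁ - 1 : ℤ) = 0 := by
        exact_mod_cast (mul_eq_zero.1 hz).resolve_right Real.pi_ne_zero
      omega
  rw [← hS0, ← hS1]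
  exact hmain

private lemma re_aux {r : ℝ} (hr0 : 0 ≤ r) (hr : r < 1) (x : ℝ) :
    0 < (1 - (r : ℂ) * Complex.exp ((x : ℝ) * Complex.I)).re := by
  have h1 : ((r : ℂ) * Complex.exp ((x : ℝ) * Complex.I)).re = r * Real.cos x := by
    simp [Complex.mul_re, Complex.exp_ofReal_mul_I_re]
  have h2 : (1 - (r : ℂ) * Complex.exp ((x : ℝ) * Complex.I)).re
      = 1 - r * Real.cos x := by rw [Complex.sub_re, Complex.one_re, h1]
  rw [h2]
  nlinarith [Real.cos_le_one x, Real.neg_one_le_cos x]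

private lemma ne_aux {r : ℝ} (hr0 : 0 ≤ r) (hr : r < 1) (x : ℝ) :
    1 - (r : ℂ) * Complex.exp ((x : ℝ) * Complex.I) ≠ 0 := by
  intro h0
  have := re_aux hr0 hr x
  rw [h0] at this
  simp at this

private lemma slit_aux {r : ℝ} (hr0 : 0 ≤ r) (hr : r < 1) (x : ℝ) :
    1 - (r : ℂ) * Complex.exp ((x : ℝ) * Complex.I) ∈ Complex.slitPlane :=
  Complex.mem_slitPlane_iff.2 (Or.inl (re_aux hr0 hr x))

private lemma cont_arg_aux {r : ℝ} (hr0 : 0 ≤ r) (hr : r < 1) (f : ℝ → ℝ) (hf : Continuous f) :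
    Continuous (fun t => Complex.arg (1 - (r : ℂ) * Complex.exp ((f t : ℝ) * Complex.I))) := by
  rw [continuous_iff_continuousAt]
  intro t
  have hc : ContinuousAt (fun t => 1 - (r : ℂ) * Complex.exp ((f t : ℝ) * Complex.I)) t := by
    apply Continuous.continuousAt
    exact continuous_const.sub (continuous_const.mul
      (Complex.continuous_exp.comp ((Complex.continuous_ofReal.comp hf).mul continuous_const)))
  exact ContinuousAt.comp (g := Complex.arg)
    (x := t) (Complex.continuousAt_arg (slit_aux hr0 hr (f t))) hc

/-- polar form of the bottom loop value -/
private lemma polar_bottom (x : ℝ) :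
    Complex.exp ((x : ℝ) * Complex.I) / 2 - 3/4
      = ((Complex.abs (Complex.exp ((x : ℝ) * Complex.I) / 2 - 3/4) : ℝ) : ℂ)
        * Complex.exp (((Real.pi
            + Complex.arg (1 - ((2/3 : ℝ) : ℂ) * Complex.exp ((x : ℝ) * Complex.I))) : ℝ)
          * Complex.I) := by
  set E := Complex.exp ((x : ℝ) * Complex.I) with hE
  set w : ℂ := 1 - ((2/3 : ℝ) : ℂ) * E with hw
  have hw0 : w ≠ 0 := ne_aux (by norm_num) (by norm_num) x
  have hkey : E / 2 - 3/4 = -(3/4) * w := by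
    rw [hw]
    push_cast
    ring
  have hargw : Complex.exp ((Complex.arg w : ℝ) * Complex.I) = w / (Complex.abs w : ℂ) := by
    rw [eq_div_iff (Complex.ofReal_ne_zero.2 (AbsoluteValue.ne_zero _ hw0)), mul_comm]
    exact Complex.abs_mul_exp_arg_mul_I w
  rw [hkey]
  have habs : Complex.abs (-(3/4) * w) = 3/4 * Complex.abs w := by
    rw [map_mul]
    norm_num [Complex.abs_apply']
  rw [habs]
  push_cast
  rw [add_mul, Complex.exp_add, Complex.exp_pi_mul_I, hargw]
  have hne : (Complex.abs w : ℂ) ≠ 0 := Complex.ofReal_ne_zero.2 (AbsoluteValue.ne_zero _ hw0)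
  field_simp

/-- polar form of the top loop value -/
private lemma polar_top (x : ℝ) :
    Complex.exp ((x : ℝ) * Complex.I) - 3/4
      = ((Complex.abs (Complex.exp ((x : ℝ) * Complex.I) - 3/4) : ℝ) : ℂ)
        * Complex.exp (((x
            + Complex.arg (1 - ((3/4 : ℝ) : ℂ) * Complex.exp ((-x : ℝ) * Complex.I))) : ℝ)
          * Complex.I) := by
  set E := Complex.exp ((x : ℝ) * Complex.I) with hE
  have hEabs : Complex.abs E = 1 := Complex.abs_exp_ofReal_mul_I x
  set w : ℂ := 1 - ((3/4 : ℝ) : ℂ) * Complex.exp ((-x : ℝ) * Complex.I) with hw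
  have hw0 : w ≠ 0 := ne_aux (by norm_num) (by norm_num) (-x)
  have hinv : Complex.exp ((-x : ℝ) * Complex.I) = E⁻¹ := by
    rw [hE, ← Complex.exp_neg]
    push_cast
    ring_nf
  have hE0 : E ≠ 0 := Complex.exp_ne_zero _
  have hkey : E - 3/4 = E * w := by
    rw [hw, hinv]
    push_cast
    field_simp
  have hargw : Complex.exp ((Complex.arg w : ℝ) * Complex.I) = w / (Complex.abs w : ℂ) := by
    rw [eq_div_iff (Complex.ofReal_ne_zero.2 (AbsoluteValue.ne_zero _ hw0)), mul_comm]
    exact Complex.abs_mul_exp_arg_mul_I w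
  rw [hkey]
  have habs : Complex.abs (E * w) = Complex.abs w := by
    rw [map_mul, hEabs, one_mul]
  rw [habs]
  push_cast
  rw [add_mul, Complex.exp_add, hargw, ← hE]
  have hne : (Complex.abs w : ℂ) ≠ 0 := Complex.ofReal_ne_zero.2 (AbsoluteValue.ne_zero _ hw0)
  field_simp

set_option maxHeartbeats 1000000 in
theorem stmt11 (p₁ p₂ q₁ q₂ : ℤ) (h : p₁ * q₂ - p₂ * q₁ ≠ 0)
    (F : Circle × unitInterval → (Circle × Circle) × unitInterval)
    (hF : Continuous F)
    (h0 : ∀ z : Circle, F (z, 0) = ((z ^ p₁, z ^ p₂), 0))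
    (h1 : ∀ z : Circle, F (z, 1) = ((z ^ p₁, z ^ p₂), 1)) :
    ∃ (z w : Circle) (s : unitInterval),
      F (z, s) = ((w ^ q₁, w ^ q₂), ⟨1 / 2, by norm_num⟩) := by
  by_contra hcon
  push_neg at hcon
  have hq12 : q₁ ≠ 0 ∨ q₂ ≠ 0 := by
    by_contra hq
    push_neg at hq
    exact h (by rw [hq.1, hq.2]; ring)
  set g : ℕ := Int.gcd q₁ q₂ with hgdef
  have hgpos : 0 < g := Int.gcd_pos_iff.2 hq12
  have hgz : (g : ℤ) ≠ 0 := by exact_mod_cast hgpos.ne'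
  have hgR : ((g : ℝ)) ≠ 0 := by exact_mod_cast hgpos.ne'
  set Q₁ : ℤ := q₁ / (g : ℤ) with hQ₁def
  set Q₂ : ℤ := q₂ / (g : ℤ) with hQ₂def
  have hq₁ : (g : ℤ) * Q₁ = q₁ := Int.mul_ediv_cancel' (Int.gcd_dvd_left _ _)
  have hq₂ : (g : ℤ) * Q₂ = q₂ := Int.mul_ediv_cancel' (Int.gcd_dvd_right _ _)
  have hcop : Int.gcd Q₁ Q₂ = 1 := Int.gcd_div_gcd_div_gcd hgpos
  set d : ℤ := p₁ * Q₂ - p₂ * Q₁ with hddef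
  have hdne : d ≠ 0 := by
    intro hd0
    apply h
    have h2 : p₁ * q₂ - p₂ * q₁ = (g : ℤ) * (p₁ * Q₂ - p₂ * Q₁) := by
      rw [← hq₁, ← hq₂]; ring
    rw [h2, ← hddef, hd0, mul_zero]
  have hdR : ((d : ℝ)) ≠ 0 := Int.cast_ne_zero.2 hdne
  -- the avoidance property
  have havoid : ∀ (z : Circle) (s : unitInterval),
      ¬(((F (z, s)).1.1 ^ Q₂ = (F (z, s)).1.2 ^ Q₁) ∧ (((F (z, s)).2 : ℝ) = 1/2)) := by
    rintro z s ⟨hab, hτ⟩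
    set a := (F (z, s)).1.1 with ha
    set b := (F (z, s)).1.2 with hb
    set A : ℤ := Int.gcdA Q₁ Q₂ with hA
    set B : ℤ := Int.gcdB Q₁ Q₂ with hB
    have hbez : Q₁ * A + Q₂ * B = 1 := by
      have h2 := Int.gcd_eq_gcd_ab Q₁ Q₂
      rw [hcop] at h2
      exact_mod_cast h2.symm
    set v : Circle := a ^ A * b ^ B with hv
    have hv₁ : v ^ Q₁ = a := by
      rw [hv, mul_zpow, ← zpow_mul, ← zpow_mul]
      have h3 : b ^ (B * Q₁) = a ^ (Q₂ * B) := by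
        rw [mul_comm B Q₁, zpow_mul, ← hab, ← zpow_mul]
      rw [h3, ← zpow_add, show A * Q₁ + Q₂ * B = 1 by rw [mul_comm A Q₁]; exact hbez,
        zpow_one]
    have hv₂ : v ^ Q₂ = b := by
      rw [hv, mul_zpow, ← zpow_mul, ← zpow_mul]
      have h3 : a ^ (A * Q₂) = b ^ (Q₁ * A) := by
        rw [mul_comm A Q₂, zpow_mul, hab, ← zpow_mul]
      rw [h3, ← zpow_add, show Q₁ * A + B * Q₂ = 1 by rw [mul_comm B Q₂]; exact hbez,
        zpow_one]
    set w : Circle := Circle.exp (Complex.arg (v : ℂ) / (g : ℝ)) with hw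
    have hwg : w ^ ((g : ℕ) : ℤ) = v := by
      rw [hw, circle_exp_zpow]
      have h4 : (((g : ℕ) : ℤ) : ℝ) * (Complex.arg (v : ℂ) / (g : ℝ)) = Complex.arg (v : ℂ) := by
        push_cast
        field_simp
      rw [h4]
      exact Circle.exp_arg v
    have hw₁ : w ^ q₁ = a := by rw [← hq₁, zpow_mul, hwg, hv₁]
    have hw₂ : w ^ q₂ = b := by rw [← hq₂, zpow_mul, hwg, hv₂]
    apply hcon z w s
    have hτ' : (F (z, s)).2 = (⟨1/2, by norm_num⟩ : unitInterval) := Subtype.ext hτ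
    calc F (z, s) = ((a, b), (F (z, s)).2) := rfl
      _ = ((w ^ q₁, w ^ q₂), ⟨1/2, by norm_num⟩) := by rw [hw₁, hw₂, hτ']
  -- the auxiliary maps
  set c : Circle × unitInterval → Circle :=
    fun x => (F x).1.1 ^ Q₂ * ((F x).1.2) ^ (-Q₁) with hcmap
  have hccont : Continuous c := by
    apply Continuous.mul
    · exact (continuous_zpow Q₂).comp (continuous_fst.comp (continuous_fst.comp hF))
    · exact (continuous_zpow (-Q₁)).comp (continuous_snd.comp (continuous_fst.comp hF))
  have hτc : Continuous (fun x : Circle × unitInterval => ((F x).2 : ℝ)) :=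
    continuous_subtype_val.comp (continuous_snd.comp hF)
  set Z : ℝ × ℝ → Circle × unitInterval :=
    fun ts => (Circle.exp (2 * Real.pi * ts.1), Set.projIcc 0 1 zero_le_one ts.2) with hZ
  have hZc : Continuous Z := by
    apply Continuous.prodMk
    · exact Circle.exp.continuous.comp (continuous_const.mul continuous_fst)
    · exact continuous_projIcc.comp continuous_snd
  set Φ : ℝ × ℝ → ℂ := fun ts =>
    ((c (Z ts) : ℂ)) * ((((1 + ((F (Z ts)).2 : ℝ)) / 2 : ℝ)) : ℂ) - ((3/4 : ℝ) : ℂ) with hΦ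
  have hΦc : Continuous Φ := by
    apply Continuous.sub _ continuous_const
    apply Continuous.mul
    · exact continuous_subtype_val.comp (hccont.comp hZc)
    · exact Complex.continuous_ofReal.comp ((continuous_const.add (hτc.comp hZc)).div_const 2)
  have hΦne : ∀ p, Φ p ≠ 0 := by
    intro p hp0
    rw [hΦ] at hp0
    rw [sub_eq_zero] at hp0
    set x := Z p with hx
    set R : ℝ := (1 + ((F x).2 : ℝ)) / 2 with hR
    have hτx : ((F x).2 : ℝ) ∈ Set.Icc (0:ℝ) 1 := (F x).2.2
    have hRpos : 0 < R := by rw [hR]; simp only [Set.mem_Icc] at hτx; linarith [hτx.1]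
    have habs : R = 3/4 := by
      have h5 := congrArg Complex.abs hp0
      rw [map_mul, Circle.abs_coe, one_mul, Complex.abs_ofReal, Complex.abs_ofReal,
        abs_of_pos hRpos] at h5
      rw [h5]; norm_num
    have hτhalf : ((F x).2 : ℝ) = 1/2 := by
      rw [hR] at habs; linarith
    have hcone : c x = 1 := by
      rw [habs] at hp0
      field_simp at hp0
      exact Circle.coe_injective (hp0.trans Circle.coe_one.symm)
    apply havoid x.1 x.2
    constructor
    · have h8 : (F x).1.1 ^ Q₂ * ((F x).1.2) ^ (-Q₁) = 1 := hcone
      rw [zpow_neg, mul_inv_eq_one] at h8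
      exact h8
    · exact hτhalf
  have hloop : ∀ s, Φ (0, s) = Φ (1, s) := by
    intro s
    have hcirc : Circle.exp (2 * Real.pi * (0:ℝ)) = Circle.exp (2 * Real.pi * (1:ℝ)) := by
      rw [mul_zero, mul_one, show (2 * Real.pi) = 0 + 2 * Real.pi by ring,
        Circle.periodic_exp 0]
    simp only [hΦ, hZ]
    rw [hcirc]
  -- boundary values
  have hproj0 : Set.projIcc (0:ℝ) 1 zero_le_one (0:ℝ) = (0 : unitInterval) := by
    apply Subtype.ext; simp [Set.projIcc]
  have hproj1 : Set.projIcc (0:ℝ) 1 zero_le_one (1:ℝ) = (1 : unitInterval) := by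
    apply Subtype.ext; simp [Set.projIcc]
  have hcz : ∀ z : Circle, (z ^ p₁) ^ Q₂ * (z ^ p₂) ^ (-Q₁) = z ^ d := by
    intro z
    rw [← zpow_mul, ← zpow_mul, ← zpow_add]
    congr 1
    rw [hddef]; ring
  have hpow : ∀ t : ℝ, (((Circle.exp (2 * Real.pi * t)) ^ d : Circle) : ℂ)
      = Complex.exp (((2 * Real.pi * (d : ℝ) * t) : ℝ) * Complex.I) := by
    intro t
    rw [circle_exp_zpow, Circle.coe_exp]
    congr 1
    push_cast
    ring
  have hbot : ∀ t : ℝ, Φ (t, 0)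
      = Complex.exp (((2 * Real.pi * (d : ℝ) * t) : ℝ) * Complex.I) / 2 - 3/4 := by
    intro t
    simp only [hΦ, hZ, hproj0, hcmap]
    rw [h0 (Circle.exp (2 * Real.pi * t))]
    rw [hcz, hpow]
    norm_num
    ring
  have htop : ∀ t : ℝ, Φ (t, 1)
      = Complex.exp (((2 * Real.pi * (d : ℝ) * t) : ℝ) * Complex.I) - 3/4 := by
    intro t
    simp only [hΦ, hZ, hproj1, hcmap]
    rw [h1 (Circle.exp (2 * Real.pi * t))]
    rw [hcz, hpow]
    norm_num
  -- the lifts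
  set θ₀ : ℝ → ℝ := fun t => Real.pi
      + Complex.arg (1 - ((2/3 : ℝ) : ℂ)
        * Complex.exp (((2 * Real.pi * (d : ℝ) * t) : ℝ) * Complex.I)) with hθ₀def
  set θ₁ : ℝ → ℝ := fun t => 2 * Real.pi * (d : ℝ) * t
      + Complex.arg (1 - ((3/4 : ℝ) : ℂ)
        * Complex.exp (((-(2 * Real.pi * (d : ℝ) * t)) : ℝ) * Complex.I)) with hθ₁def
  have hθ₀c : Continuous θ₀ := by
    apply continuous_const.add
    exact cont_arg_aux (by norm_num) (by norm_num)
      (fun t => 2 * Real.pi * (d : ℝ) * t) (by continuity)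
  have hθ₁c : Continuous θ₁ := by
    apply Continuous.add
    · continuity
    · exact cont_arg_aux (by norm_num) (by norm_num)
        (fun t => -(2 * Real.pi * (d : ℝ) * t)) (by continuity)
  have e0 : ∀ t, Φ (t, 0)
      = ((Complex.abs (Φ (t, 0)) : ℝ) : ℂ) * Complex.exp ((θ₀ t : ℝ) * Complex.I) := by
    intro t
    rw [hbot t]
    simp only [hθ₀def]
    exact polar_bottom (2 * Real.pi * (d : ℝ) * t)
  have e1 : ∀ t, Φ (t, 1)
      = ((Complex.abs (Φ (t, 1)) : ℝ) : ℂ) * Complex.exp ((θ₁ t : ℝ) * Complex.I) := by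
    intro t
    rw [htop t]
    simp only [hθ₁def]
    exact polar_top (2 * Real.pi * (d : ℝ) * t)
  have hkey := key_lemma Φ hΦc hloop hΦne θ₀ θ₁ hθ₀c hθ₁c e0 e1
  -- compute the endpoint values
  have hexp1 : Complex.exp (((2 * Real.pi * (d : ℝ) * 1) : ℝ) * Complex.I) = 1 := by
    rw [← Complex.exp_int_mul_two_pi_mul_I d]
    congr 1
    push_cast
    ring
  have hexp0 : Complex.exp (((2 * Real.pi * (d : ℝ) * 0) : ℝ) * Complex.I) = 1 := by
    norm_num
  have hexp1' : Complex.exp (((-(2 * Real.pi * (d : ℝ) * 1)) : ℝ) * Complex.I) = 1 := by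
    rw [← Complex.exp_int_mul_two_pi_mul_I (-d)]
    congr 1
    push_cast
    ring
  have hexp0' : Complex.exp (((-(2 * Real.pi * (d : ℝ) * 0)) : ℝ) * Complex.I) = 1 := by
    norm_num
  have hθ₀val : θ₀ 1 - θ₀ 0 = 0 := by
    simp only [hθ₀def]
    rw [hexp1, hexp0]
    ring
  have hθ₁val : θ₁ 1 - θ₁ 0 = 2 * Real.pi * (d : ℝ) := by
    simp only [hθ₁def]
    rw [hexp1', hexp0']
    ring
  rw [hθ₀val, hθ₁val] at hkey
  have hd0 : (d : ℝ) = 0 := by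
    have h9 : 2 * Real.pi * (d : ℝ) = 0 := hkey.symm
    exact (mul_eq_zero.1 h9).resolve_left
      (ne_of_gt (by positivity : (0:ℝ) < 2 * Real.pi))
  exact hdR hd0
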